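/- Let P₀ and P₁ be Borel probability measures on Ω^∞ = {0,1}^ℕ, and for a sequence ω with P₀(ω^t) > 0 for all t, define D^t(ω) = P₁(ω^t)/P₀(ω^t). Fix 0 < α < ∞ and let A ⊆ Ω^∞ be measurable. If for every ω ∈ A either some prefix satisfies P₀(ω^t) = 0, or limsup_{t→∞} D^t(ω) ≥ α, then P₁(A) ≥ α·P₀(A). -/

import Mathlib

open MeasureTheory Filter Set
open scoped ENNReal

abbrev BinSeq := ℕ → Bool

/-- The cylinder set of all sequences sharing the first `t` coordinates with `ω`. -/
def cyl (ω : BinSeq) (t : ℕ) : Set BinSeq := {ω' | ∀ s < t, ω' s = ω s}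



def cylL (w : List Bool) : Set BinSeq := {ω' | ∀ i < w.length, ω' i = w.getD i false}

lemma cyl_eq_cylL (ω : BinSeq) (t : ℕ) :
    cyl ω t = cylL (List.ofFn fun i : Fin t => ω i) := by
  ext ω'
  simp only [cyl, cylL, mem_setOf_eq, List.length_ofFn]
  refine forall₂_congr fun i hi => ?_
  rw [List.getD_eq_getElem _ _ (by simpa using hi), List.getElem_ofFn]

lemma cylL_subset_of_prefix {v w : List Bool} (h : v <+: w) : cylL w ⊆ cylL v := by
  intro ω' hω' i hi
  have hlen : v.length ≤ w.length := h.length_le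
  rw [hω' i (lt_of_lt_of_le hi hlen)]
  rw [List.getD_eq_getElem _ _ hi, List.getD_eq_getElem _ _ (lt_of_lt_of_le hi hlen)]
  exact (List.IsPrefix.getElem h hi).symm

lemma isOpen_cylL (w : List Bool) : IsOpen (cylL w) := by
  have : cylL w = ⋂ i ∈ Finset.range w.length, {ω' : BinSeq | ω' i = w.getD i false} := by
    ext ω'; simp [cylL]
  rw [this]
  refine isOpen_biInter_finset fun i _ => ?_
  have h1 : IsOpen ({b : Bool | b = w.getD i false}) := isOpen_discrete _
  exact show IsOpen ((fun ω' : BinSeq => ω' i) ⁻¹' {b : Bool | b = w.getD i false}) from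
    h1.preimage (continuous_apply i)

lemma measurableSet_cylL (w : List Bool) : MeasurableSet (cylL w) :=
  (isOpen_cylL w).measurableSet

lemma mem_cyl_self (ω : BinSeq) (t : ℕ) : ω ∈ cyl ω t := fun _ _ => rfl

lemma cyl_antitone (ω : BinSeq) {t t' : ℕ} (h : t ≤ t') : cyl ω t' ⊆ cyl ω t :=
  fun _ hω' s hs => hω' s (lt_of_lt_of_le hs h)

lemma prefix_total {v w : List Bool} {ω' : BinSeq} (hv : ω' ∈ cylL v) (hw : ω' ∈ cylL w) :
    v <+: w ∨ w <+: v := by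
  rcases le_total v.length w.length with hl | hl
  · left
    rw [List.prefix_iff_eq_take]
    refine List.ext_getElem (by simp [hl]) fun i h1 h2 => ?_
    rw [List.getElem_take]
    rw [← List.getD_eq_getElem v false h1, ← List.getD_eq_getElem w false (by omega)]
    rw [← hv i h1, ← hw i (by omega)]
  · right
    rw [List.prefix_iff_eq_take]
    refine List.ext_getElem (by simp [hl]) fun i h1 h2 => ?_
    rw [List.getElem_take]
    rw [← List.getD_eq_getElem w false h1, ← List.getD_eq_getElem v false (by omega)]
    rw [← hv i (by omega), ← hw i h1]

lemma exists_cyl_subset {U : Set BinSeq} (hU : IsOpen U) {ω : BinSeq} (hω : ω ∈ U) :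
    ∃ t, cyl ω t ⊆ U := by
  obtain ⟨I, u, hIu, hsub⟩ := isOpen_pi_iff.mp hU ω hω
  rcases I.bddAbove with ⟨N, hN⟩
  refine ⟨N + 1, fun ω' hω' => hsub ?_⟩
  intro i hi
  have : ω' i = ω i := hω' i (Nat.lt_succ_of_le (hN hi))
  rw [this]; exact (hIu i hi).2

/-- Lemma (comparison via limsup): if for every `ω ∈ A` either some prefix has
`P₀(ω^t) = 0`, or the limsup of the likelihood ratio is at least `α`, then
`P₁(A) ≥ α · P₀(A)`. -/
theorem measure_ge_of_limsup_ratio_ge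
    (P₀ P₁ : Measure BinSeq) [IsProbabilityMeasure P₀] [IsProbabilityMeasure P₁]
    (α : ℝ≥0∞) (hα0 : 0 < α) (hαtop : α ≠ ⊤)
    (A : Set BinSeq) (hA : MeasurableSet A)
    (h : ∀ ω ∈ A, (∃ t, P₀ (cyl ω t) = 0) ∨
      α ≤ Filter.limsup (fun t => P₁ (cyl ω t) / P₀ (cyl ω t)) atTop) :
    α * P₀ A ≤ P₁ A := by
  classical
  have H : ∀ β < α, ∀ δ : ℝ≥0∞, 0 < δ → β * P₀ A ≤ P₁ A + δ := by
    intro β hβ δ hδ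
    have hlt : P₁ A < P₁ A + δ := ENNReal.lt_add_right (measure_ne_top _ _) hδ.ne'
    obtain ⟨U, hAU, hUopen, hU⟩ := Set.exists_isOpen_lt_of_lt A _ hlt
    set G : Set (List Bool) := {w | cylL w ⊆ U ∧ β * P₀ (cylL w) ≤ P₁ (cylL w)} with hG
    have cover : ∀ ω ∈ A, ∃ w ∈ G, ω ∈ cylL w := by
      intro ω hω
      obtain ⟨t₀, ht₀⟩ := exists_cyl_subset hUopen (hAU hω)
      rcases h ω hω with ⟨t, h0⟩ | hlim
      · refine ⟨List.ofFn fun i : Fin (max t t₀) => ω i, ⟨?_, ?_⟩, ?_⟩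
        · rw [← cyl_eq_cylL]; exact (cyl_antitone ω (le_max_right _ _)).trans ht₀
        · rw [← cyl_eq_cylL]
          have h0' : P₀ (cyl ω (max t t₀)) = 0 :=
            le_antisymm (h0 ▸ measure_mono (cyl_antitone ω (le_max_left _ _))) (zero_le)
          simp [h0']
        · rw [← cyl_eq_cylL]; exact mem_cyl_self _ _
      · have hfreq : ∃ᶠ t in atTop, β < P₁ (cyl ω t) / P₀ (cyl ω t) :=
          Filter.frequently_lt_of_lt_limsup (by isBoundedDefault) (lt_of_lt_of_le hβ hlim)
        obtain ⟨t, hratio, ht'⟩ := (hfreq.and_eventually (eventually_ge_atTop t₀)).exists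
        refine ⟨List.ofFn fun i : Fin t => ω i, ⟨?_, ?_⟩, ?_⟩
        · rw [← cyl_eq_cylL]; exact (cyl_antitone ω ht').trans ht₀
        · rw [← cyl_eq_cylL]
          by_cases h0 : P₀ (cyl ω t) = 0
          · simp [h0]
          · exact le_of_lt
              ((ENNReal.lt_div_iff_mul_lt (Or.inl h0) (Or.inl (measure_ne_top _ _))).mp hratio)
        · rw [← cyl_eq_cylL]; exact mem_cyl_self _ _
    set M : Set (List Bool) := {w ∈ G | ∀ v, v <+: w → v ≠ w → v ∉ G} with hM
    have hMG : M ⊆ G := fun w hw => hw.1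
    have coverM : A ⊆ ⋃ w ∈ M, cylL w := by
      intro ω hω
      obtain ⟨w, hwG, hωw⟩ := cover ω hω
      have hex : ∃ n, w.take n ∈ G := ⟨w.length, by simpa using hwG⟩
      refine mem_biUnion (show w.take (Nat.find hex) ∈ M from ?_) ?_
      · refine ⟨Nat.find_spec hex, fun v hv hne hvG => ?_⟩
        have hvlen : v.length < (w.take (Nat.find hex)).length :=
          lt_of_le_of_ne hv.length_le fun hl => hne (List.prefix_iff_eq_take.mp hv ▸ by
            rw [hl]; simp)
        have hvw : v = w.take v.length :=
          List.prefix_iff_eq_take.mp (hv.trans (List.take_prefix _ _))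
        have hlt2 : v.length < Nat.find hex := lt_of_lt_of_le hvlen (by simp)
        rw [hvw] at hvG
        exact Nat.find_min hex hlt2 hvG
      · exact cylL_subset_of_prefix (List.take_prefix _ _) hωw
    have hdisj : M.PairwiseDisjoint cylL := by
      intro w hw v hv hne
      refine Set.disjoint_left.mpr fun {ω'} hω'w hω'v => ?_
      rcases prefix_total hω'w hω'v with hp | hp
      · exact hv.2 w hp hne hw.1
      · exact hw.2 v hp hne.symm hv.1
    calc β * P₀ A ≤ β * P₀ (⋃ w ∈ M, cylL w) := mul_le_mul_right (measure_mono coverM) β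
      _ = β * ∑' w : M, P₀ (cylL w) := by
          rw [measure_biUnion (Set.to_countable M) hdisj fun w _ => measurableSet_cylL w]
      _ = ∑' w : M, β * P₀ (cylL w) := ENNReal.tsum_mul_left.symm
      _ ≤ ∑' w : M, P₁ (cylL w) := ENNReal.tsum_le_tsum fun w => (hMG w.2).2
      _ = P₁ (⋃ w ∈ M, cylL w) :=
          (measure_biUnion (Set.to_countable M) hdisj fun w _ => measurableSet_cylL w).symm
      _ ≤ P₁ U := measure_mono (iUnion₂_subset fun w hw => (hMG hw).1)
      _ ≤ P₁ A + δ := hU.le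
  refine ENNReal.le_of_forall_pos_le_add fun ε hε _ => ?_
  by_cases hP0 : P₀ A = 0
  · simp [hP0]
  set δ : ℝ≥0∞ := min (ε : ℝ≥0∞) α / 2 with hδdef
  have hδ0 : 0 < δ := ENNReal.div_pos (lt_min (by exact_mod_cast hε) hα0).ne' (by norm_num)
  have hδα : δ < α := lt_of_le_of_lt
    (ENNReal.div_le_div_right (min_le_right _ _) 2) (ENNReal.half_lt_self hα0.ne' hαtop)
  have hβ : α - δ < α := ENNReal.sub_lt_self hαtop hα0.ne' hδ0.ne'
  have hαle : α ≤ (α - δ) + δ := le_tsub_add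
  have hδε : δ + δ ≤ ε := by
    have : δ ≤ (ε : ℝ≥0∞) / 2 := ENNReal.div_le_div_right (min_le_left _ _) 2
    calc δ + δ ≤ (ε : ℝ≥0∞) / 2 + (ε : ℝ≥0∞) / 2 := add_le_add this this
      _ = ε := ENNReal.add_halves _
  calc α * P₀ A ≤ ((α - δ) + δ) * P₀ A := mul_le_mul_left hαle _
    _ = (α - δ) * P₀ A + δ * P₀ A := add_mul _ _ _
    _ ≤ (P₁ A + δ) + δ * 1 := add_le_add (H _ hβ δ hδ0) (mul_le_mul_right prob_le_one δ)
    _ = P₁ A + (δ + δ) := by rw [mul_one, add_assoc]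
    _ ≤ P₁ A + ε := add_le_add_right hδε _
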